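/- arXiv:1107.5588 — 4 statements merged into one kernel-verified Lean document; each statement's English description precedes it below -/
import Mathlib

section
/- Let Γ be a finite bipartite graph and Ω ⊆ ℝ^E its matching polytope. A point ω ∈ Ω is an extreme point (vertex) of Ω if and only if ω(e) ∈ {0,1} for every edge e, i.e. if and only if ω is the indicator function of a perfect matching of Γ. (In particular, the vertices of the matching polytope of a finite bipartite graph are exactly the perfect matchings.) -/
/-- A subset `M` of the edges of a finite bipartite graph (with edge-endpoint maps
`blk : E → B` and `wht : E → W`) is a perfect matching (dimer cover) if every
vertex is the endpoint of exactly one edge of `M`. -/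
def IsPerfectMatching {B W E : Type*} (blk : E → B) (wht : E → W) (M : Set E) : Prop :=
  (∀ b : B, ∃! e : E, e ∈ M ∧ blk e = b) ∧ (∀ w : W, ∃! e : E, e ∈ M ∧ wht e = w)

/-- The matching polytope of a finite bipartite graph: functions `ω : E → ℝ` with
`0 ≤ ω e ≤ 1` and whose sum over the edges at each vertex equals `1`. -/
def MatchingPolytope {B W E : Type*} [Fintype E] [DecidableEq B] [DecidableEq W]
    (blk : E → B) (wht : E → W) : Set (E → ℝ) :=
  {ω | (∀ e : E, 0 ≤ ω e ∧ ω e ≤ 1) ∧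
    (∀ b : B, ∑ e ∈ Finset.univ.filter (fun e => blk e = b), ω e = 1) ∧
    (∀ w : W, ∑ e ∈ Finset.univ.filter (fun e => wht e = w), ω e = 1)}



open Finset

section Aux
variable {B W E : Type*} [Fintype B] [Fintype W] [Fintype E] [DecidableEq B] [DecidableEq W]
    (blk : E → B) (wht : E → W) (ω : E → ℝ)

/-- Helper: a pair bound for nonnegative sums. -/
lemma pair_le_sum {s : Finset E} {f : E → ℝ} (hf : ∀ e ∈ s, 0 ≤ f e) {a b : E}
    (ha : a ∈ s) (hb : b ∈ s) (hab : a ≠ b) : f a + f b ≤ ∑ e ∈ s, f e := by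
  classical
  rw [← Finset.sum_pair hab]
  refine Finset.sum_le_sum_of_subset_of_nonneg ?_ (fun e he _ => hf e he)
  intro x hx
  rcases Finset.mem_insert.1 hx with rfl | hx
  · exact ha
  · rw [Finset.mem_singleton.1 hx]; exact hb

/-- Every fractional perfect matching contains a genuine perfect matching in its support. -/
lemma exists_matching_fun
    (hpos : ∀ e, 0 ≤ ω e)
    (hB : ∀ b, ∑ e ∈ Finset.univ.filter (fun e => blk e = b), ω e = 1)
    (hW : ∀ w, ∑ e ∈ Finset.univ.filter (fun e => wht e = w), ω e = 1) :
    ∃ m : B → E, (∀ b, blk (m b) = b) ∧ (∀ b, 0 < ω (m b)) ∧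
      Function.Bijective (fun b => wht (m b)) := by
  classical
  -- total sum equals card B and card W
  have hsumB : ∑ e, ω e = (Fintype.card B : ℝ) := by
    rw [← Finset.sum_fiberwise Finset.univ blk ω]
    simp only [hB]
    rw [Finset.sum_const, Finset.card_univ]
    simp
  have hsumW : ∑ e, ω e = (Fintype.card W : ℝ) := by
    rw [← Finset.sum_fiberwise Finset.univ wht ω]
    simp only [hW]
    rw [Finset.sum_const, Finset.card_univ]
    simp
  have hcard : Fintype.card B = Fintype.card W := by
    have := hsumB.symm.trans hsumW
    exact_mod_cast this
  -- the neighborhood function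
  set t : B → Finset W := fun b =>
    Finset.univ.filter (fun w => ∃ e, ω e ≠ 0 ∧ blk e = b ∧ wht e = w) with ht
  have hall : ∀ A : Finset B, A.card ≤ (A.biUnion t).card := by
    intro A
    have key : (A.card : ℝ) ≤ ((A.biUnion t).card : ℝ) := by
      have h1 : (A.card : ℝ) = ∑ b ∈ A, ∑ e ∈ Finset.univ.filter (fun e => blk e = b), ω e := by
        simp [hB]
      have h2 : ∑ b ∈ A, ∑ e ∈ Finset.univ.filter (fun e => blk e = b), ω e
          = ∑ e ∈ Finset.univ.filter (fun e => blk e ∈ A), ω e :=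
        Finset.sum_fiberwise_eq_sum_filter _ _ _ _
      have h3 : ∑ e ∈ Finset.univ.filter (fun e => blk e ∈ A), ω e
          ≤ ∑ e ∈ Finset.univ.filter (fun e => wht e ∈ A.biUnion t), ω e := by
        rw [← Finset.sum_filter_ne_zero (Finset.univ.filter (fun e => blk e ∈ A))]
        refine Finset.sum_le_sum_of_subset_of_nonneg ?_ (fun e _ _ => hpos e)
        intro e he
        simp only [Finset.mem_filter, Finset.mem_univ, true_and] at he ⊢
        obtain ⟨hA, hne⟩ := he
        exact Finset.mem_biUnion.2 ⟨blk e, hA, by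
          simp only [ht, Finset.mem_filter, Finset.mem_univ, true_and]
          exact ⟨e, hne, rfl, rfl⟩⟩
      have h4 : ∑ e ∈ Finset.univ.filter (fun e => wht e ∈ A.biUnion t), ω e
          = ((A.biUnion t).card : ℝ) := by
        rw [← Finset.sum_fiberwise_eq_sum_filter Finset.univ (A.biUnion t) wht ω]
        simp only [hW]
        rw [Finset.sum_const, nsmul_eq_mul, mul_one]
      linarith [h1, h2.le, h3, h4.le, h4.ge]
    exact_mod_cast key
  obtain ⟨f, hfinj, hft⟩ := (Finset.all_card_le_biUnion_card_iff_exists_injective t).1 hall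
  have hchoice : ∀ b : B, ∃ e, ω e ≠ 0 ∧ blk e = b ∧ wht e = f b := by
    intro b
    have := hft b
    simp only [ht, Finset.mem_filter, Finset.mem_univ, true_and] at this
    exact this
  choose m hm0 hmblk hmwht using hchoice
  refine ⟨m, hmblk, fun b => lt_of_le_of_ne (hpos (m b)) (Ne.symm (hm0 b)), ?_⟩
  have : (fun b => wht (m b)) = f := funext hmwht
  rw [this]
  rw [Fintype.bijective_iff_injective_and_card]
  exact ⟨hfinj, hcard⟩

end Aux

section Main
variable {B W E : Type*} [Fintype B] [Fintype W] [Fintype E] [DecidableEq B] [DecidableEq W]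

/-- 0/1-valued points of the matching polytope are extreme. -/
lemma zeroOne_extreme (blk : E → B) (wht : E → W) (ω : E → ℝ)
    (hω : ω ∈ MatchingPolytope blk wht) (h01 : ∀ e : E, ω e = 0 ∨ ω e = 1) :
    ω ∈ Set.extremePoints ℝ (MatchingPolytope blk wht) := by
  refine ⟨hω, ?_⟩
  rintro x hx y hy ⟨a, b, ha, hb, hab, hxy⟩
  have hx' := hx.1; have hy' := hy.1
  have hcoord : ∀ e, x e = ω e ∧ y e = ω e := by
    intro e
    have hsum : a * x e + b * y e = ω e := by
      have := congrFun hxy e; simpa using this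
    rcases h01 e with h0 | h1
    · rw [h0] at hsum ⊢
      constructor <;> nlinarith [(hx' e).1, (hy' e).1]
    · rw [h1] at hsum ⊢
      constructor <;> nlinarith [(hx' e).2, (hy' e).2]
  exact funext fun e => (hcoord e).1

/-- Extreme points of the matching polytope are 0/1-valued. -/
lemma extreme_zeroOne (blk : E → B) (wht : E → W) (ω : E → ℝ)
    (hω : ω ∈ MatchingPolytope blk wht)
    (hext : ω ∈ Set.extremePoints ℝ (MatchingPolytope blk wht)) :
    ∀ e : E, ω e = 0 ∨ ω e = 1 := by
  classical
  by_contra h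
  push_neg at h
  obtain ⟨e0, he00, he01⟩ := h
  obtain ⟨hbound, hB, hW⟩ := hω
  have he0pos : 0 < ω e0 := lt_of_le_of_ne (hbound e0).1 (Ne.symm he00)
  have he0lt : ω e0 < 1 := lt_of_le_of_ne (hbound e0).2 he01
  obtain ⟨m, hmblk, hmpos, hmbij⟩ :=
    exists_matching_fun blk wht ω (fun e => (hbound e).1) hB hW
  haveI : Nonempty B := ⟨blk e0⟩
  set t : ℝ := Finset.univ.inf' Finset.univ_nonempty (fun b => ω (m b)) with htdef
  have ht_le : ∀ b : B, t ≤ ω (m b) := fun b => Finset.inf'_le _ (Finset.mem_univ b)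
  obtain ⟨b0, -, hb0⟩ := Finset.exists_mem_eq_inf' Finset.univ_nonempty (fun b => ω (m b))
  have htpos : 0 < t := by rw [htdef, hb0]; exact hmpos b0
  have mem_fiber : ∀ e : E, e ∈ Finset.univ.filter (fun e' => blk e' = blk e) :=
    fun e => Finset.mem_filter.2 ⟨Finset.mem_univ e, rfl⟩
  have mem_fiber' : ∀ e : E, m (blk e) ∈ Finset.univ.filter (fun e' => blk e' = blk e) :=
    fun e => Finset.mem_filter.2 ⟨Finset.mem_univ _, hmblk (blk e)⟩
  -- if e is not the matching edge at its black vertex, then ω e + ω (m (blk e)) ≤ 1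
  have pair_bound : ∀ e : E, e ≠ m (blk e) → ω e + ω (m (blk e)) ≤ 1 := by
    intro e hne
    have := pair_le_sum (s := Finset.univ.filter (fun e' => blk e' = blk e))
      (f := ω) (fun e' _ => (hbound e').1) (mem_fiber e) (mem_fiber' e) hne
    rw [hB (blk e)] at this
    exact this
  have ht1 : t < 1 := by
    by_contra hge
    push_neg at hge
    by_cases hcase : e0 = m (blk e0)
    · have : t ≤ ω e0 := hcase ▸ ht_le (blk e0)
      linarith
    · have h1 := pair_bound e0 hcase
      have h2 := ht_le (blk e0)
      linarith
  -- the indicator of the matching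
  set χ : E → ℝ := fun e => if m (blk e) = e then (1 : ℝ) else 0 with hχdef
  have hχm : ∀ b : B, χ (m b) = 1 := by
    intro b
    simp [hχdef, hmblk b]
  have hχ0 : ∀ e : E, e ≠ m (blk e) → χ e = 0 := by
    intro e hne
    simp only [hχdef, if_neg (Ne.symm hne)]
  -- fiber sums for χ
  have hχB : ∀ b : B, ∑ e ∈ Finset.univ.filter (fun e => blk e = b), χ e = 1 := by
    intro b
    rw [Finset.sum_eq_single_of_mem (m b)
      (Finset.mem_filter.2 ⟨Finset.mem_univ _, hmblk b⟩)]
    · exact hχm b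
    · intro e he hne
      have hbe : blk e = b := (Finset.mem_filter.1 he).2
      apply hχ0
      rw [hbe]
      exact fun h => hne (h)
  have hχW : ∀ w : W, ∑ e ∈ Finset.univ.filter (fun e => wht e = w), χ e = 1 := by
    intro w
    obtain ⟨bw, hbw0⟩ := hmbij.2 w
    have hbw : wht (m bw) = w := hbw0
    rw [Finset.sum_eq_single_of_mem (m bw)
      (Finset.mem_filter.2 ⟨Finset.mem_univ _, hbw⟩)]
    · exact hχm bw
    · intro e he hne
      have hwe : wht e = w := (Finset.mem_filter.1 he).2
      apply hχ0
      intro heq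
      have hw' : wht (m (blk e)) = w := by rw [← heq]; exact hwe
      have hww : wht (m (blk e)) = wht (m bw) := by rw [hw', hbw]
      have hbeq : blk e = bw := hmbij.1 hww
      rw [hbeq] at heq
      exact hne heq
  have hχΩ : χ ∈ MatchingPolytope blk wht := by
    refine ⟨?_, hχB, hχW⟩
    intro e
    simp only [hχdef]
    split <;> norm_num
  -- the complementary point
  set y : E → ℝ := fun e => (1 - t)⁻¹ * (ω e - t * χ e) with hydef
  have h1t : (0:ℝ) < 1 - t := by linarith
  have hyΩ : y ∈ MatchingPolytope blk wht := by
    refine ⟨?_, ?_, ?_⟩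
    · intro e
      by_cases hcase : e = m (blk e)
      · have hχe : χ e = 1 := by rw [hcase]; exact hχm (blk e)
        have hte : t ≤ ω e := by rw [hcase]; exact ht_le (blk e)
        constructor
        · apply mul_nonneg (le_of_lt (inv_pos.2 h1t))
          rw [hχe]; linarith
        · rw [hydef]
          simp only [hχe, mul_one]
          rw [inv_mul_le_iff₀ h1t, mul_one]
          linarith [(hbound e).2]
      · have hχe : χ e = 0 := hχ0 e hcase
        have hub : ω e ≤ 1 - t := by
          have h1 := pair_bound e hcase
          have h2 := ht_le (blk e)
          linarith
        constructor
        · apply mul_nonneg (le_of_lt (inv_pos.2 h1t))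
          rw [hχe]; linarith [(hbound e).1]
        · rw [hydef]
          simp only [hχe, mul_zero, sub_zero]
          rw [inv_mul_le_iff₀ h1t, mul_one]
          exact hub
    · intro b
      simp only [hydef]
      rw [← Finset.mul_sum, Finset.sum_sub_distrib, hB b, ← Finset.mul_sum, hχB b]
      field_simp
    · intro w
      simp only [hydef]
      rw [← Finset.mul_sum, Finset.sum_sub_distrib, hW w, ← Finset.mul_sum, hχW w]
      field_simp
  -- ω lies in the open segment between χ and y
  have hseg : ω ∈ openSegment ℝ χ y := by
    refine ⟨t, 1 - t, htpos, h1t, by ring, ?_⟩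
    funext e
    simp only [Pi.add_apply, Pi.smul_apply, smul_eq_mul, hydef]
    field_simp
    ring
  have hχω : χ = ω := hext.2 hχΩ hyΩ hseg
  have : χ e0 = ω e0 := congrFun hχω e0
  simp only [hχdef] at this
  split at this
  · rw [← this] at he0lt; norm_num at he0lt
  · rw [← this] at he0pos; norm_num at he0pos

end Main

/-- The vertices (extreme points) of the matching polytope of a finite bipartite graph
are exactly the `{0,1}`-valued points, i.e. exactly the indicator functions of
perfect matchings. -/
theorem extremePoints_matchingPolytope_iff
    {B W E : Type*} [Fintype B] [Fintype W] [Fintype E] [DecidableEq B] [DecidableEq W]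
    (blk : E → B) (wht : E → W)
    (ω : E → ℝ) (hω : ω ∈ MatchingPolytope blk wht) :
    (ω ∈ Set.extremePoints ℝ (MatchingPolytope blk wht) ↔ ∀ e : E, ω e = 0 ∨ ω e = 1) ∧
    (ω ∈ Set.extremePoints ℝ (MatchingPolytope blk wht) ↔
      ∃ M : Set E, IsPerfectMatching blk wht M ∧ ω = M.indicator (fun _ => (1 : ℝ))) := by
  classical
  have main : ω ∈ Set.extremePoints ℝ (MatchingPolytope blk wht) ↔
      ∀ e : E, ω e = 0 ∨ ω e = 1 :=
    ⟨extreme_zeroOne blk wht ω hω, zeroOne_extreme blk wht ω hω⟩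
  refine ⟨main, main.trans ⟨?_, ?_⟩⟩
  · intro h01
    obtain ⟨hbound, hB, hW⟩ := hω
    refine ⟨{e | ω e = 1}, ⟨?_, ?_⟩, ?_⟩
    · intro b
      have hsum := hB b
      have hex : ∃ e ∈ Finset.univ.filter (fun e => blk e = b), ω e ≠ 0 := by
        by_contra hc
        push_neg at hc
        rw [Finset.sum_eq_zero hc] at hsum
        norm_num at hsum
      obtain ⟨e1, he1mem, he1ne⟩ := hex
      have he1 : ω e1 = 1 := (h01 e1).resolve_left he1ne
      have hblk1 : blk e1 = b := (Finset.mem_filter.1 he1mem).2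
      refine ⟨e1, ⟨he1, hblk1⟩, ?_⟩
      rintro e2 ⟨he2, hblk2⟩
      by_contra hne
      have hpair := pair_le_sum (s := Finset.univ.filter (fun e => blk e = b))
        (f := ω) (fun e _ => (hbound e).1)
        (Finset.mem_filter.2 ⟨Finset.mem_univ _, hblk2⟩) he1mem hne
      rw [hsum, he1, he2] at hpair
      norm_num at hpair
    · intro w
      have hsum := hW w
      have hex : ∃ e ∈ Finset.univ.filter (fun e => wht e = w), ω e ≠ 0 := by
        by_contra hc
        push_neg at hc
        rw [Finset.sum_eq_zero hc] at hsum
        norm_num at hsum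
      obtain ⟨e1, he1mem, he1ne⟩ := hex
      have he1 : ω e1 = 1 := (h01 e1).resolve_left he1ne
      have hwht1 : wht e1 = w := (Finset.mem_filter.1 he1mem).2
      refine ⟨e1, ⟨he1, hwht1⟩, ?_⟩
      rintro e2 ⟨he2, hwht2⟩
      by_contra hne
      have hpair := pair_le_sum (s := Finset.univ.filter (fun e => wht e = w))
        (f := ω) (fun e _ => (hbound e).1)
        (Finset.mem_filter.2 ⟨Finset.mem_univ _, hwht2⟩) he1mem hne
      rw [hsum, he1, he2] at hpair
      norm_num at hpair
    · funext e
      by_cases he : ω e = 1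
      · rw [Set.indicator_of_mem (by exact he : e ∈ {e | ω e = 1})]
        exact he
      · rw [Set.indicator_of_notMem (by exact he : e ∉ {e | ω e = 1})]
        exact (h01 e).resolve_right he
  · rintro ⟨M, hM, rfl⟩
    intro e
    by_cases he : e ∈ M
    · right; rw [Set.indicator_of_mem he]
    · left; rw [Set.indicator_of_notMem he]
end

section
/- If the matching polytope Ω of a finite bipartite graph Γ is nonempty — that is, if Γ admits a fractional perfect matching ω : E → [0,1] whose sum over the edges at each vertex equals 1 — then Γ admits a perfect matching. -/
/-- If a finite bipartite graph admits a fractional perfect matching — a function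
`ω : E → [0,1]` whose sum over the edges at each vertex equals `1` — then it admits
a perfect matching. -/
theorem exists_perfectMatching_of_fractional
    {B W E : Type*} [Fintype B] [Fintype W] [Fintype E] [DecidableEq B] [DecidableEq W]
    (blk : E → B) (wht : E → W)
    (ω : E → ℝ)
    (hbound : ∀ e : E, 0 ≤ ω e ∧ ω e ≤ 1)
    (hblack : ∀ b : B, ∑ e ∈ Finset.univ.filter (fun e => blk e = b), ω e = 1)
    (hwhite : ∀ w : W, ∑ e ∈ Finset.univ.filter (fun e => wht e = w), ω e = 1) :
    ∃ M : Set E, IsPerfectMatching blk wht M := by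
  classical
  -- The neighbor sets via positive-weight edges
  set t : B → Finset W :=
    fun b => Finset.univ.filter (fun w => ∃ e, 0 < ω e ∧ blk e = b ∧ wht e = w) with ht
  -- Hall's condition
  have hall : ∀ S : Finset B, S.card ≤ (S.biUnion t).card := by
    intro S
    have h1 : (S.card : ℝ) = ∑ e ∈ Finset.univ.filter (fun e => blk e ∈ S), ω e := by
      rw [← Finset.sum_fiberwise_eq_sum_filter Finset.univ S blk ω]
      simp [hblack]
    have h2 : ((S.biUnion t).card : ℝ)
        = ∑ e ∈ Finset.univ.filter (fun e => wht e ∈ S.biUnion t), ω e := by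
      rw [← Finset.sum_fiberwise_eq_sum_filter Finset.univ (S.biUnion t) wht ω]
      simp [hwhite]
    have hsub : Finset.univ.filter (fun e => blk e ∈ S ∧ 0 < ω e)
        ⊆ Finset.univ.filter (fun e => wht e ∈ S.biUnion t) := by
      intro e he
      simp only [Finset.mem_filter, Finset.mem_univ, true_and] at he ⊢
      refine Finset.mem_biUnion.2 ⟨blk e, he.1, ?_⟩
      simp only [ht, Finset.mem_filter, Finset.mem_univ, true_and]
      exact ⟨e, he.2, rfl, rfl⟩
    have heq : ∑ e ∈ Finset.univ.filter (fun e => blk e ∈ S), ω e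
        = ∑ e ∈ Finset.univ.filter (fun e => blk e ∈ S ∧ 0 < ω e), ω e := by
      refine (Finset.sum_subset ?_ ?_).symm
      · intro e he
        simp only [Finset.mem_filter, Finset.mem_univ, true_and] at he ⊢
        exact he.1
      · intro e he hne
        simp only [Finset.mem_filter, Finset.mem_univ, true_and, not_and] at he hne
        have := hne he
        linarith [(hbound e).1]
    have hle : (S.card : ℝ) ≤ ((S.biUnion t).card : ℝ) := by
      rw [h1, h2, heq]
      exact Finset.sum_le_sum_of_subset_of_nonneg hsub (fun e _ _ => (hbound e).1)
    exact_mod_cast hle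
  obtain ⟨f, hfinj, hft⟩ := (Finset.all_card_le_biUnion_card_iff_exists_injective t).1 hall
  -- card B = card W
  have hcard : Fintype.card B = Fintype.card W := by
    have hB : (Fintype.card B : ℝ) = ∑ e, ω e := by
      rw [← Finset.sum_fiberwise Finset.univ blk ω]
      rw [Finset.sum_congr rfl (fun b _ => hblack b)]; simp
    have hW : (Fintype.card W : ℝ) = ∑ e, ω e := by
      rw [← Finset.sum_fiberwise Finset.univ wht ω]
      rw [Finset.sum_congr rfl (fun w _ => hwhite w)]; simp
    exact_mod_cast hB.trans hW.symm
  have hfbij : Function.Bijective f :=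
    (Fintype.bijective_iff_injective_and_card f).2 ⟨hfinj, hcard⟩
  -- choose an edge for each black vertex
  have hchoice : ∀ b : B, ∃ e : E, 0 < ω e ∧ blk e = b ∧ wht e = f b := by
    intro b
    have := hft b
    simp only [ht, Finset.mem_filter, Finset.mem_univ, true_and] at this
    exact this
  choose g hg using hchoice
  refine ⟨Set.range g, ?_, ?_⟩
  · intro b
    refine ⟨g b, ⟨⟨b, rfl⟩, (hg b).2.1⟩, ?_⟩
    rintro e ⟨⟨b', rfl⟩, hbe⟩
    rw [(hg b').2.1] at hbe
    rw [hbe]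
  · intro w
    obtain ⟨b, rfl⟩ := hfbij.2 w
    refine ⟨g b, ⟨⟨b, rfl⟩, (hg b).2.2⟩, ?_⟩
    rintro e ⟨⟨b', rfl⟩, hbe⟩
    rw [(hg b').2.2] at hbe
    rw [hfinj hbe]
end

section
/- Let 𝔽 be a field and B_0, B_1, B_2, B_3, B_4, B_5, B_6 nonzero elements of 𝔽. Define c_1 = B_2B_3/(B_0B_4), c_2 = B_3B_1/(B_0B_5), c_3 = B_1B_2/(B_0B_6) and Q = c_1c_2 + c_2c_3 + c_3c_1. Then (Q/c_1)·(B_5B_6/B_1) = (Q/c_2)·(B_4B_6/B_2) = (Q/c_3)·(B_4B_5/B_3) = (B_1B_4 + B_2B_5 + B_3B_6)/B_0. Consequently, if the Y–Δ move transforms the conductances c_1, c_2, c_3 of a Y into the conductances C_i = Q/c_i of a Δ, and the new variable B_7 is defined by any one of C_1 = B_1B_7/(B_5B_6), C_2 = B_2B_7/(B_4B_6), C_3 = B_3B_7/(B_4B_5), then all three definitions agree and yield the cube recurrence B_7·B_0 = B_1B_4 + B_2B_5 + B_3B_6. -/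
/-- The cube recurrence from the Y–Δ move: with conductances
`c₁ = B₂B₃/(B₀B₄)`, `c₂ = B₃B₁/(B₀B₅)`, `c₃ = B₁B₂/(B₀B₆)` and
`Q = c₁c₂ + c₂c₃ + c₃c₁`, the three possible definitions of the new variable `B₇`,
namely `(Q/cᵢ)` times the appropriate ratio of `B`'s, all agree and equal
`(B₁B₄ + B₂B₅ + B₃B₆)/B₀`. -/
theorem YDelta_cube_recurrence {𝔽 : Type*} [Field 𝔽]
    (B0 B1 B2 B3 B4 B5 B6 : 𝔽)
    (h0 : B0 ≠ 0) (h1 : B1 ≠ 0) (h2 : B2 ≠ 0) (h3 : B3 ≠ 0)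
    (h4 : B4 ≠ 0) (h5 : B5 ≠ 0) (h6 : B6 ≠ 0) :
    ((B2 * B3 / (B0 * B4)) * (B3 * B1 / (B0 * B5)) +
      (B3 * B1 / (B0 * B5)) * (B1 * B2 / (B0 * B6)) +
      (B1 * B2 / (B0 * B6)) * (B2 * B3 / (B0 * B4))) / (B2 * B3 / (B0 * B4)) *
        (B5 * B6 / B1) = (B1 * B4 + B2 * B5 + B3 * B6) / B0 ∧
    ((B2 * B3 / (B0 * B4)) * (B3 * B1 / (B0 * B5)) +
      (B3 * B1 / (B0 * B5)) * (B1 * B2 / (B0 * B6)) +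
      (B1 * B2 / (B0 * B6)) * (B2 * B3 / (B0 * B4))) / (B3 * B1 / (B0 * B5)) *
        (B4 * B6 / B2) = (B1 * B4 + B2 * B5 + B3 * B6) / B0 ∧
    ((B2 * B3 / (B0 * B4)) * (B3 * B1 / (B0 * B5)) +
      (B3 * B1 / (B0 * B5)) * (B1 * B2 / (B0 * B6)) +
      (B1 * B2 / (B0 * B6)) * (B2 * B3 / (B0 * B4))) / (B1 * B2 / (B0 * B6)) *
        (B4 * B5 / B3) = (B1 * B4 + B2 * B5 + B3 * B6) / B0 := by
  have d1 : B0 * B4 ≠ 0 := mul_ne_zero h0 h4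
  have d2 : B0 * B5 ≠ 0 := mul_ne_zero h0 h5
  have d3 : B0 * B6 ≠ 0 := mul_ne_zero h0 h6
  have hQ : (B2 * B3 / (B0 * B4)) * (B3 * B1 / (B0 * B5)) +
      (B3 * B1 / (B0 * B5)) * (B1 * B2 / (B0 * B6)) +
      (B1 * B2 / (B0 * B6)) * (B2 * B3 / (B0 * B4)) =
      (B1 * B4 + B2 * B5 + B3 * B6) * (B1 * B2 * B3) / (B0 ^ 2 * (B4 * B5 * B6)) := by
    rw [div_mul_div_comm, div_mul_div_comm, div_mul_div_comm,
      div_add_div _ _ (mul_ne_zero d1 d2) (mul_ne_zero d2 d3),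
      div_add_div _ _ (mul_ne_zero (mul_ne_zero d1 d2) (mul_ne_zero d2 d3)) (mul_ne_zero d3 d1),
      div_eq_div_iff (by simp [h0, h4, h5, h6]) (by simp [h0, h4, h5, h6])]
    ring
  rw [hQ]
  refine ⟨?_, ?_, ?_⟩ <;>
  · rw [div_div_eq_mul_div]
    simp only [div_mul_eq_mul_div, div_div, div_mul_div_comm]
    rw [div_eq_div_iff (by simp [h0, h1, h2, h3, h4, h5, h6]) h0]
    field_simp
end

section
/- Let 𝔽 be a field and C_1, C_2, C_3 ∈ 𝔽 nonzero with C_1 + C_2 + C_3 ≠ 0. Set X_1 = C_2/C_3, X_2 = C_3/C_1, X_3 = C_1/C_2. Then the denominators below are nonzero and (1 + X_1 + X_1X_3)/(X_3(1 + X_2 + X_1X_2)) = X_1, (1 + X_2 + X_1X_2)/(X_1(1 + X_3 + X_2X_3)) = X_2, (1 + X_3 + X_2X_3)/(X_2(1 + X_1 + X_1X_3)) = X_3. That is, on the locus where the three face variables are the ratios X_1 = C_2/C_3, X_2 = C_3/C_1, X_3 = C_1/C_2 of conductances, the composite of the four cluster mutations realizing the Y–Δ move returns the face variables X_1, X_2,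 X_3 to themselves. -/
/-- On the resistor-network locus `X₁ = C₂/C₃`, `X₂ = C₃/C₁`, `X₃ = C₁/C₂`,
the composite of the four cluster mutations realizing the Y–Δ move returns the face
variables to themselves. -/
theorem YDelta_cluster_fixes_resistor_locus {𝔽 : Type*} [Field 𝔽]
    (C1 C2 C3 : 𝔽) (h1 : C1 ≠ 0) (h2 : C2 ≠ 0) (h3 : C3 ≠ 0)
    (hs : C1 + C2 + C3 ≠ 0) :
    (C1 / C2 * (1 + C3 / C1 + (C2 / C3) * (C3 / C1)) ≠ 0) ∧
    (C2 / C3 * (1 + C1 / C2 + (C3 / C1) * (C1 / C2)) ≠ 0) ∧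
    (C3 / C1 * (1 + C2 / C3 + (C2 / C3) * (C1 / C2)) ≠ 0) ∧
    (1 + C2 / C3 + (C2 / C3) * (C1 / C2)) /
        (C1 / C2 * (1 + C3 / C1 + (C2 / C3) * (C3 / C1))) = C2 / C3 ∧
    (1 + C3 / C1 + (C2 / C3) * (C3 / C1)) /
        (C2 / C3 * (1 + C1 / C2 + (C3 / C1) * (C1 / C2))) = C3 / C1 ∧
    (1 + C1 / C2 + (C3 / C1) * (C1 / C2)) /
        (C3 / C1 * (1 + C2 / C3 + (C2 / C3) * (C1 / C2))) = C1 / C2 := by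
  have e1 : 1 + C3 / C1 + (C2 / C3) * (C3 / C1) = (C1 + C2 + C3) / C1 := by
    field_simp; ring
  have e2 : 1 + C1 / C2 + (C3 / C1) * (C1 / C2) = (C1 + C2 + C3) / C2 := by
    field_simp; ring
  have e3 : 1 + C2 / C3 + (C2 / C3) * (C1 / C2) = (C1 + C2 + C3) / C3 := by
    field_simp; ring
  rw [e1, e2, e3]
  refine ⟨mul_ne_zero (div_ne_zero h1 h2) (div_ne_zero hs h1),
    mul_ne_zero (div_ne_zero h2 h3) (div_ne_zero hs h2),
    mul_ne_zero (div_ne_zero h3 h1) (div_ne_zero hs h3), ?_, ?_, ?_⟩ <;>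
    field_simp <;> ring
end
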